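/- Let Γ = Γ((n_i),(m_i)) be a generalised Baumslag–Solitar group over a cycle of length s whose augmentation products n(Ξ) and m(Ξ) are isocratic. Then for every index i ∈ {1,…,s}: (i) for every prime p with ν_p(n(Ξ)) = ν_p(m(Ξ)) and every natural number l, there exist a finite group Q and a homomorphism φ : Γ → Q such that p^l divides the order of φ(a_i); and (ii) for every prime p with ν_p(n(Ξ)) ≠ ν_p(m(Ξ)), for every finite group Q and every homomorphism φ : Γ → Q, p does not divide the order of φ(a_i). (Together these say that Γ induces on each vertex group ⟨a_i⟩ exactly the full pro-I(n(Ξ),m(Ξ)) topology, where I(n,m) is the set of primes p with ν_p(n) = ν_p(m).) -/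

import Mathlib

/-- The relators of a generalised Baumslag–Solitar group over a cycle of length `s`:
generators are `some i` (= `a_{i+1}`) for `i : Fin s` together with the stable letter
`none` (= `t`); the relator indexed by a non-final `i` is `a_i^{n_i} a_{i+1}^{-m_i}`,
and the relator indexed by the final vertex is `t a_s^{n_s} t⁻¹ a_1^{-m_s}`. -/
def cycleRel (s : ℕ) (n m : Fin s → ℤ) (i : Fin s) : FreeGroup (Option (Fin s)) :=
  if h : (i : ℕ) + 1 < s then
    FreeGroup.of (some i) ^ (n i) * FreeGroup.of (some ⟨(i : ℕ) + 1, h⟩) ^ (-(m i))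
  else
    FreeGroup.of none * FreeGroup.of (some i) ^ (n i) * (FreeGroup.of none)⁻¹ *
      FreeGroup.of (some ⟨0, i.pos⟩) ^ (-(m i))

/-- The generalised Baumslag–Solitar group over a cycle of length `s`, with presentation
`⟨a_1,…,a_s, t ∣ a_i^{n_i} = a_{i+1}^{m_i} (1 ≤ i ≤ s−1), t a_s^{n_s} t⁻¹ = a_1^{m_s}⟩`. -/
abbrev GBSCycle (s : ℕ) (n m : Fin s → ℤ) := PresentedGroup (Set.range (cycleRel s n m))

/-- The vertex generator `a_i` of the generalised Baumslag–Solitar group over a cycle. -/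
abbrev GBSCycle.a (s : ℕ) (n m : Fin s → ℤ) (i : Fin s) : GBSCycle s n m :=
  PresentedGroup.of (some i)

/-- Two integers are *isocratic* if every prime dividing both divides them with the same
`p`-adic valuation. -/
def Isocratic (a b : ℤ) : Prop :=
  ∀ p : ℕ, p.Prime → (p : ℤ) ∣ a → (p : ℤ) ∣ b →
    padicValNat p a.natAbs = padicValNat p b.natAbs

namespace GBSAux

/-- action of units on `Multiplicative (ZMod q)` -/
def act (q : ℕ) : (ZMod q)ˣ →* MulAut (Multiplicative (ZMod q)) where
  toFun u := AddEquiv.toMultiplicative (DistribMulAction.toAddAut (ZMod q)ˣ (ZMod q) u)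
  map_one' := by ext x; simp [AddEquiv.toMultiplicative]
  map_mul' u v := by ext x; simp [AddEquiv.toMultiplicative, mul_smul]

lemma act_apply (q : ℕ) (u : (ZMod q)ˣ) (x : ZMod q) :
    act q u (Multiplicative.ofAdd x) = Multiplicative.ofAdd ((u : ZMod q) * x) := by
  simp [act, AddEquiv.toMultiplicative, Units.smul_def]

lemma finite_sdp {N G : Type} [Group N] [Group G] [Finite N] [Finite G]
    (φ : G →* MulAut N) : Finite (N ⋊[φ] G) :=
  Finite.of_injective (fun x => (x.left, x.right))
    (by intro a b h; simp only [Prod.mk.injEq] at h; exact SemidirectProduct.ext h.1 h.2)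

/-- the vertex labels -/
def xx {s : ℕ} (n m : Fin s → ℤ) (j : Fin s) : ℤ :=
  (∏ k ∈ Finset.Iio j, n k) * (∏ k ∈ Finset.Ici j, m k)

lemma xx_ne_zero {s : ℕ} {n m : Fin s → ℤ} (hn : ∀ i, n i ≠ 0) (hm : ∀ i, m i ≠ 0)
    (j : Fin s) : xx n m j ≠ 0 :=
  mul_ne_zero (Finset.prod_ne_zero_iff.mpr fun k _ => hn k)
    (Finset.prod_ne_zero_iff.mpr fun k _ => hm k)

lemma xx_step {s : ℕ} (n m : Fin s → ℤ) (j j' : Fin s) (h : (j' : ℕ) = (j : ℕ) + 1) :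
    n j * xx n m j = m j * xx n m j' := by
  have h1 : Finset.Iio j' = insert j (Finset.Iio j) := by
    ext k; simp [Fin.lt_def, Fin.ext_iff, h]
  have h2 : Finset.Ici j = insert j (Finset.Ici j') := by
    ext k
    simp only [Finset.mem_Ici, Finset.mem_insert, Fin.le_def, Fin.ext_iff, h]
    omega
  have hj1 : j ∉ Finset.Iio j := by simp
  have hj2 : j ∉ Finset.Ici j' := by simp [Fin.le_def, h]
  rw [xx, xx, h1, h2, Finset.prod_insert hj1, Finset.prod_insert hj2]
  ring

lemma xx_zero {s : ℕ} (hs : 0 < s) (n m : Fin s → ℤ) :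
    xx n m ⟨0, hs⟩ = ∏ k, m k := by
  have h1 : Finset.Iio (⟨0, hs⟩ : Fin s) = ∅ := by ext k; simp [Fin.lt_def]
  have h2 : Finset.Ici (⟨0, hs⟩ : Fin s) = Finset.univ := by ext k; simp [Fin.le_def]
  rw [xx, h1, h2]; simp

lemma xx_last {s : ℕ} (n m : Fin s → ℤ) (j : Fin s) (hj : (j : ℕ) + 1 = s) :
    n j * xx n m j = (∏ k, n k) * m j := by
  have h2 : Finset.Ici j = {j} := by
    ext k
    simp only [Finset.mem_Ici, Finset.mem_singleton, Fin.le_def, Fin.ext_iff]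
    have := k.isLt; omega
  have h1 : Finset.univ = insert j (Finset.Iio j) := by
    ext k; simp [Fin.lt_def]; have := k.isLt; omega
  rw [xx, h2, Finset.prod_singleton, h1, Finset.prod_insert (by simp)]
  ring

lemma inl_zpow {q : ℕ} (z : ZMod q) (k : ℤ) :
    (SemidirectProduct.inl (φ := act q) (Multiplicative.ofAdd z)) ^ k =
      SemidirectProduct.inl (φ := act q) (Multiplicative.ofAdd ((k : ZMod q) * z)) := by
  rw [← map_zpow]
  congr 1
  rw [← ofAdd_zsmul, zsmul_eq_mul]

lemma partI {s : ℕ} (hs : 0 < s) (n m : Fin s → ℤ) (hn : ∀ i, n i ≠ 0) (hm : ∀ i, m i ≠ 0)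
    (i : Fin s) (p : ℕ) (hp : p.Prime)
    (hv : (∏ j, n j).natAbs.factorization p = (∏ j, m j).natAbs.factorization p)
    (l : ℕ) :
    ∃ (Q : Type) (_ : Group Q) (_ : Finite Q) (φ : GBSCycle s n m →* Q),
      p ^ l ∣ orderOf (φ (GBSCycle.a s n m i)) := by
  set N : ℤ := ∏ j, n j with hNdef
  set M : ℤ := ∏ j, m j with hMdef
  have hN0 : N ≠ 0 := Finset.prod_ne_zero_iff.mpr fun k _ => hn k
  have hM0 : M ≠ 0 := Finset.prod_ne_zero_iff.mpr fun k _ => hm k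
  have hNa0 : N.natAbs ≠ 0 := Int.natAbs_ne_zero.mpr hN0
  have hMa0 : M.natAbs ≠ 0 := Int.natAbs_ne_zero.mpr hM0
  set v : ℕ := N.natAbs.factorization p with hvdef
  set c : ℕ := (xx n m i).natAbs.factorization p with hcdef
  set L : ℕ := l + c + 1 with hLdef
  set q : ℕ := p ^ L with hqdef
  haveI : NeZero q := ⟨pow_ne_zero _ hp.pos.ne'⟩
  -- decomposition N = p^v * N'
  have hdvdN : ((p : ℤ)) ^ v ∣ N := by
    have h1 : (p : ℕ) ^ v ∣ N.natAbs := Nat.ordProj_dvd _ _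
    have h2 : ((p ^ v : ℕ) : ℤ) ∣ (N.natAbs : ℤ) := Int.natCast_dvd_natCast.mpr h1
    rw [Int.dvd_natAbs] at h2
    exact_mod_cast h2
  have hdvdM : ((p : ℤ)) ^ v ∣ M := by
    have h1 : (p : ℕ) ^ v ∣ M.natAbs := hv ▸ Nat.ordProj_dvd _ _
    have h2 : ((p ^ v : ℕ) : ℤ) ∣ (M.natAbs : ℤ) := Int.natCast_dvd_natCast.mpr h1
    rw [Int.dvd_natAbs] at h2
    exact_mod_cast h2
  set N' : ℤ := N / (p : ℤ) ^ v with hN'def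
  set M' : ℤ := M / (p : ℤ) ^ v with hM'def
  have hN' : N = (p : ℤ) ^ v * N' := (Int.mul_ediv_cancel' hdvdN).symm
  have hM' : M = (p : ℤ) ^ v * M' := (Int.mul_ediv_cancel' hdvdM).symm
  have hpN' : ¬ (p : ℤ) ∣ N' := by
    intro hdd
    have h1 : (p : ℤ) ^ (v + 1) ∣ N := by
      rw [hN', pow_succ]
      exact mul_dvd_mul_left _ hdd
    have h2 : (p : ℕ) ^ (v + 1) ∣ N.natAbs := by
      have := Int.natAbs_dvd_natAbs.mpr h1
      simpa [Int.natAbs_pow] using this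
    exact Nat.pow_succ_factorization_not_dvd hNa0 hp h2
  have hpM' : ¬ (p : ℤ) ∣ M' := by
    intro hdd
    have h1 : (p : ℤ) ^ (v + 1) ∣ M := by
      rw [hM', pow_succ]
      exact mul_dvd_mul_left _ hdd
    have h2 : (p : ℕ) ^ (v + 1) ∣ M.natAbs := by
      have := Int.natAbs_dvd_natAbs.mpr h1
      simpa [Int.natAbs_pow] using this
    rw [hv] at h2
    exact Nat.pow_succ_factorization_not_dvd hMa0 hp h2
  -- units
  have hunit : ∀ z : ℤ, ¬ (p : ℤ) ∣ z → IsUnit ((z : ℤ) : ZMod q) := by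
    intro z hz
    have hpz : ¬ (p : ℕ) ∣ z.natAbs := fun hd =>
      hz (Int.dvd_natAbs.mp (Int.natCast_dvd_natCast.mpr hd))
    have hcop : Nat.Coprime z.natAbs q :=
      Nat.Coprime.pow_right _ (Nat.coprime_comm.mp ((Nat.Prime.coprime_iff_not_dvd hp).mpr hpz))
    have hbase : IsUnit ((z.natAbs : ℕ) : ZMod q) := (ZMod.isUnit_iff_coprime _ _).mpr hcop
    rcases Int.natAbs_eq z with h | h
    · rw [h]; rw [Int.cast_natCast]; exact hbase
    · rw [h]; rw [Int.cast_neg, Int.cast_natCast]; exact hbase.neg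
  have hUN : IsUnit ((N' : ℤ) : ZMod q) := hunit N' hpN'
  have hUM : IsUnit ((M' : ℤ) : ZMod q) := hunit M' hpM'
  set uN := hUN.unit with huNdef
  set uM := hUM.unit with huMdef
  set u : (ZMod q)ˣ := uM * uN⁻¹ with hudef
  have hu : (u : ZMod q) * ((N : ℤ) : ZMod q) = ((M : ℤ) : ZMod q) := by
    have e1 : ((uN : ZMod q)) = ((N' : ℤ) : ZMod q) := hUN.unit_spec
    have e2 : ((uM : ZMod q)) = ((M' : ℤ) : ZMod q) := hUM.unit_spec
    have e3 : ((uN⁻¹ : (ZMod q)ˣ) : ZMod q) * ((uN : (ZMod q)ˣ) : ZMod q) = 1 := uN.inv_mul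
    rw [hN', hM']
    push_cast
    rw [← e1, ← e2, hudef, Units.val_mul]
    calc ((uM : ZMod q) * ((uN⁻¹ : (ZMod q)ˣ) : ZMod q)) * ((p : ZMod q) ^ v * (uN : ZMod q))
        = (p : ZMod q) ^ v * (uM : ZMod q) * (((uN⁻¹ : (ZMod q)ˣ) : ZMod q) * (uN : ZMod q)) := by
          ring
      _ = (p : ZMod q) ^ v * (uM : ZMod q) := by rw [e3, mul_one]
  -- the finite group
  set Q : Type := Multiplicative (ZMod q) ⋊[act q] (ZMod q)ˣ with hQdef
  haveI : Finite Q := finite_sdp (act q)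
  set ξ : Fin s → ZMod q := fun j => ((xx n m j : ℤ) : ZMod q) with hξdef
  set f : Option (Fin s) → Q := fun o =>
    Option.elim o (SemidirectProduct.inr u)
      (fun j => SemidirectProduct.inl (Multiplicative.ofAdd (ξ j))) with hfdef
  have hrels : ∀ r ∈ Set.range (cycleRel s n m), FreeGroup.lift f r = 1 := by
    rintro r ⟨j, rfl⟩
    unfold cycleRel
    split_ifs with hj
    · rw [map_mul, map_zpow, map_zpow, FreeGroup.lift_apply_of, FreeGroup.lift_apply_of]
      show (SemidirectProduct.inl (Multiplicative.ofAdd (ξ j))) ^ (n j) *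
        (SemidirectProduct.inl (Multiplicative.ofAdd (ξ ⟨(j : ℕ) + 1, hj⟩))) ^ (-(m j)) = 1
      rw [inl_zpow, inl_zpow, ← map_mul, ← ofAdd_add]
      have hstep := congrArg (fun z : ℤ => ((z : ℤ) : ZMod q))
        (xx_step n m j ⟨(j : ℕ) + 1, hj⟩ rfl)
      simp only [Int.cast_mul] at hstep
      have : ((n j : ℤ) : ZMod q) * ξ j + ((-(m j) : ℤ) : ZMod q) * ξ ⟨(j : ℕ) + 1, hj⟩ = 0 := by
        push_cast
        push_cast at hstep
        linear_combination hstep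
      rw [this]
      simp
    · simp only [map_mul, map_inv, map_zpow, FreeGroup.lift_apply_of]
      show (SemidirectProduct.inr u) *
        (SemidirectProduct.inl (Multiplicative.ofAdd (ξ j))) ^ (n j) *
        (SemidirectProduct.inr u)⁻¹ *
        (SemidirectProduct.inl (Multiplicative.ofAdd (ξ ⟨0, j.pos⟩))) ^ (-(m j)) = 1
      rw [inl_zpow, inl_zpow, ← map_inv, ← SemidirectProduct.inl_aut, act_apply,
        ← map_mul, ← ofAdd_add]
      have hjlast : (j : ℕ) + 1 = s := by have := j.isLt; omega
      have hlast := congrArg (fun z : ℤ => ((z : ℤ) : ZMod q)) (xx_last n m j hjlast)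
      have hzero := congrArg (fun z : ℤ => ((z : ℤ) : ZMod q)) (xx_zero hs n m)
      simp only [Int.cast_mul] at hlast
      have hu' := hu
      rw [hNdef, hMdef] at hu'
      have h0 : (⟨0, j.pos⟩ : Fin s) = ⟨0, hs⟩ := rfl
      have : (u : ZMod q) * (((n j : ℤ) : ZMod q) * ξ j) +
          ((-(m j) : ℤ) : ZMod q) * ξ ⟨0, j.pos⟩ = 0 := by
        rw [h0]
        simp only [hξdef, Int.cast_neg]
        linear_combination (u : ZMod q) * hlast + ((m j : ℤ) : ZMod q) * hu' -
          ((m j : ℤ) : ZMod q) * hzero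
      rw [this]
      simp
  refine ⟨Q, inferInstance, inferInstance, PresentedGroup.toGroup hrels, ?_⟩
  have hφ : PresentedGroup.toGroup hrels (GBSCycle.a s n m i) =
      SemidirectProduct.inl (Multiplicative.ofAdd (ξ i)) := PresentedGroup.toGroup.of hrels
  rw [hφ, orderOf_injective (SemidirectProduct.inl (φ := act q))
    SemidirectProduct.inl_injective, orderOf_ofAdd_eq_addOrderOf]
  -- now: p ^ l ∣ addOrderOf (ξ i)
  have hx0 : xx n m i ≠ 0 := xx_ne_zero hn hm i
  have hxa0 : (xx n m i).natAbs ≠ 0 := Int.natAbs_ne_zero.mpr hx0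
  have hd : addOrderOf (ξ i) ∣ q := by
    have := addOrderOf_dvd_card (x := ξ i)
    rwa [ZMod.card q] at this
  obtain ⟨e, he, hde⟩ := (Nat.dvd_prime_pow hp).mp hd
  rw [hde]
  apply pow_dvd_pow
  by_contra hlt
  push_neg at hlt
  have hdl : addOrderOf (ξ i) ∣ p ^ (l - 1) := hde ▸ pow_dvd_pow p (by omega)
  have hsm : (p ^ (l - 1)) • ξ i = 0 := addOrderOf_dvd_iff_nsmul_eq_zero.mp hdl
  have hcast : (((p : ℤ) ^ (l - 1) * xx n m i : ℤ) : ZMod q) = 0 := by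
    rw [nsmul_eq_mul] at hsm
    push_cast
    push_cast at hsm
    exact hsm
  rw [ZMod.intCast_zmod_eq_zero_iff_dvd] at hcast
  have hnat : q ∣ (p : ℕ) ^ (l - 1) * (xx n m i).natAbs := by
    have := Int.natAbs_dvd_natAbs.mpr hcast
    simpa [Int.natAbs_mul, Int.natAbs_pow] using this
  have hle : L ≤ (l - 1) + c := by
    have hne : (p : ℕ) ^ (l - 1) * (xx n m i).natAbs ≠ 0 :=
      mul_ne_zero (pow_ne_zero _ hp.pos.ne') hxa0
    have h5 := (Nat.Prime.pow_dvd_iff_le_factorization hp hne).mp hnat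
    rw [Nat.factorization_mul (pow_ne_zero _ hp.pos.ne') hxa0, Finsupp.add_apply,
      hp.factorization_pow] at h5
    simpa using h5
  omega

/-- cyclic successor used in the relators -/
def jsucc {s : ℕ} (hs : 0 < s) (j : Fin s) : Fin s :=
  if h : (j : ℕ) + 1 < s then ⟨(j : ℕ) + 1, h⟩ else ⟨0, hs⟩

lemma jsucc_eq_add_one {s : ℕ} (hs : 0 < s) (j : Fin s) :
    haveI : NeZero s := ⟨hs.ne'⟩
    jsucc hs j = j + 1 := by
  haveI : NeZero s := ⟨hs.ne'⟩
  unfold jsucc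
  have hlt := j.isLt
  split_ifs with h
  · apply Fin.ext
    rw [Fin.val_add]
    have h1 : (1 : Fin s).val = 1 % s := rfl
    have hs2 : 2 ≤ s := by omega
    rw [h1, Nat.mod_eq_of_lt (by omega : 1 < s), Nat.mod_eq_of_lt h]
  · apply Fin.ext
    rw [Fin.val_add]
    have h1 : (1 : Fin s).val = 1 % s := rfl
    rcases Nat.eq_or_lt_of_le hs with hs1 | hs2
    · have : j.val = 0 := by omega
      simp [h1, this, ← hs1]
    · rw [h1, Nat.mod_eq_of_lt (by omega : 1 < s)]
      have : j.val + 1 = s := by omega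
      simp [this]

/-- extraction of the cycle relations at the level of orders in a finite quotient -/
lemma rel_orderOf {s : ℕ} (hs : 0 < s) (n m : Fin s → ℤ)
    {Q : Type} [Group Q] (φ : GBSCycle s n m →* Q) (j : Fin s) :
    orderOf (φ (GBSCycle.a s n m j) ^ (n j)) =
      orderOf (φ (GBSCycle.a s n m (jsucc hs j)) ^ (m j)) := by
  set ψ : FreeGroup (Option (Fin s)) →* Q :=
    φ.comp (QuotientGroup.mk' (Subgroup.normalClosure (Set.range (cycleRel s n m)))) with hψ
  have hone : ψ (cycleRel s n m j) = 1 := by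
    have h1 : (QuotientGroup.mk' (Subgroup.normalClosure (Set.range (cycleRel s n m))))
        (cycleRel s n m j) = 1 := by
      rw [QuotientGroup.mk'_apply, QuotientGroup.eq_one_iff]
      exact Subgroup.subset_normalClosure ⟨j, rfl⟩
    have : ψ (cycleRel s n m j) = φ ((QuotientGroup.mk'
        (Subgroup.normalClosure (Set.range (cycleRel s n m)))) (cycleRel s n m j)) := rfl
    rw [this, h1]; exact φ.map_one
  have hof : ∀ o : Option (Fin s), ψ (FreeGroup.of o) = φ (PresentedGroup.of o) := fun o => rfl
  unfold cycleRel at hone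
  unfold jsucc
  split_ifs at hone ⊢ with h
  · simp only [map_mul, map_zpow, hof] at hone
    rw [zpow_neg, mul_inv_eq_one] at hone
    rw [hone]
  · simp only [map_mul, map_inv, map_zpow, hof] at hone
    rw [zpow_neg, mul_inv_eq_one] at hone
    set T := φ (PresentedGroup.of none)
    have : T * φ (PresentedGroup.of (some j)) ^ (n j) * T⁻¹ =
        φ (PresentedGroup.of (some ⟨0, j.pos⟩)) ^ (m j) := hone
    have hconj := orderOf_injective (MulAut.conj T).toMonoidHom
      (MulAut.conj T).injective (φ (PresentedGroup.of (some j)) ^ (n j))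
    simp only [MulEquiv.coe_toMonoidHom, MulAut.conj_apply] at hconj
    rw [← hconj, this]

/-- `p`-valuation of the order of an integer power -/
lemma ord_zpow_fact {Q : Type} [Group Q] [Finite Q] (A : Q) {k : ℤ} (hk : k ≠ 0) (p : ℕ)
    (hp : p.Prime) :
    (orderOf (A ^ k)).factorization p =
      (orderOf A).factorization p - k.natAbs.factorization p := by
  have h1 : orderOf (A ^ k) = orderOf (A ^ k.natAbs) := by
    rcases Int.natAbs_eq k with h | h
    · conv_lhs => rw [h]
      rw [zpow_natCast]
    · conv_lhs => rw [h]
      rw [zpow_neg, zpow_natCast, orderOf_inv]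
  have hd0 : orderOf A ≠ 0 := (orderOf_pos A).ne'
  have hk0 : k.natAbs ≠ 0 := Int.natAbs_ne_zero.mpr hk
  rw [h1, orderOf_pow, Nat.factorization_div (Nat.gcd_dvd_left _ _), Finsupp.tsub_apply,
    Nat.factorization_gcd hd0 hk0, Finsupp.inf_apply]
  rcases Nat.le_total ((orderOf A).factorization p) (k.natAbs.factorization p) with hle | hle
  · rw [inf_eq_left.mpr hle]
    omega
  · rw [inf_eq_right.mpr hle]

/-- around a cycle, a pointwise-decreasing function is pointwise stable -/
lemma cycle_stable {s : ℕ} [NeZero s] (e : Fin s → ℕ) (h : ∀ j, e (j + 1) ≤ e j) :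
    ∀ j, e (j + 1) = e j := by
  have hsum : ∑ j, e (j + 1) = ∑ j, e j :=
    Fintype.sum_equiv (Equiv.addRight (1 : Fin s)) _ _ (fun j => rfl)
  intro j
  by_contra hne
  have hlt : e (j + 1) < e j := lt_of_le_of_ne (h j) hne
  have : ∑ k, e (k + 1) < ∑ k, e k :=
    Finset.sum_lt_sum (fun k _ => h k) ⟨j, Finset.mem_univ j, hlt⟩
  omega

open Fin.NatCast in
/-- a function stable around the cycle is constant -/
lemma cycle_const {s : ℕ} [NeZero s] (e : Fin s → ℕ) (h : ∀ j, e (j + 1) = e j) :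
    ∀ j k, e j = e k := by
  have key : ∀ (t : ℕ) (j : Fin s), e (j + (t : Fin s)) = e j := by
    intro t
    induction t with
    | zero => intro j; simp
    | succ t ih =>
      intro j
      have : ((t + 1 : ℕ) : Fin s) = (t : Fin s) + 1 := by push_cast; ring
      rw [this, ← add_assoc, h (j + (t : Fin s)), ih j]
  intro j k
  have : k = j + (((k - j).val : ℕ) : Fin s) := by
    rw [Fin.cast_val_eq_self]
    abel
  rw [this, key]

lemma cycle_stable' {s : ℕ} [NeZero s] (e : Fin s → ℕ) (h : ∀ j, e j ≤ e (j + 1)) :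
    ∀ j, e (j + 1) = e j := by
  have hsum : ∑ j, e (j + 1) = ∑ j, e j :=
    Fintype.sum_equiv (Equiv.addRight (1 : Fin s)) _ _ (fun j => rfl)
  intro j
  by_contra hne
  have hlt : e j < e (j + 1) := lt_of_le_of_ne (h j) (Ne.symm hne)
  have : ∑ k, e k < ∑ k, e (k + 1) :=
    Finset.sum_lt_sum (fun k _ => h k) ⟨j, Finset.mem_univ j, hlt⟩
  omega

lemma partII {s : ℕ} (hs : 0 < s) (n m : Fin s → ℤ)
    (hn : ∀ i, n i ≠ 0) (hm : ∀ i, m i ≠ 0) (i : Fin s) (p : ℕ) (hp : p.Prime)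
    (hcase : (p ∣ (∏ j, n j).natAbs ∧ ¬ p ∣ (∏ j, m j).natAbs) ∨
      (¬ p ∣ (∏ j, n j).natAbs ∧ p ∣ (∏ j, m j).natAbs))
    (Q : Type) [Group Q] [Finite Q] (φ : GBSCycle s n m →* Q) :
    ¬ p ∣ orderOf (φ (GBSCycle.a s n m i)) := by
  haveI : NeZero s := ⟨hs.ne'⟩
  have hNabs : (∏ j, n j).natAbs = ∏ j, (n j).natAbs := by
    exact map_prod Int.natAbsHom n Finset.univ
  have hMabs : (∏ j, m j).natAbs = ∏ j, (m j).natAbs := by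
    exact map_prod Int.natAbsHom m Finset.univ
  -- the valuation recurrence
  have hrec : ∀ j : Fin s,
      (orderOf (φ (GBSCycle.a s n m j))).factorization p - (n j).natAbs.factorization p =
      (orderOf (φ (GBSCycle.a s n m (j + 1)))).factorization p -
        (m j).natAbs.factorization p := by
    intro j
    have h := rel_orderOf hs n m φ j
    rw [jsucc_eq_add_one hs j] at h
    have h1 := ord_zpow_fact (φ (GBSCycle.a s n m j)) (hn j) p hp
    have h2 := ord_zpow_fact (φ (GBSCycle.a s n m (j + 1))) (hm j) p hp
    rw [h, h2] at h1
    exact h1.symm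
  have hoord : ∀ j : Fin s, orderOf (φ (GBSCycle.a s n m j)) ≠ 0 :=
    fun j => (orderOf_pos _).ne'
  set E : Fin s → ℕ := fun j => (orderOf (φ (GBSCycle.a s n m j))).factorization p with hE
  suffices hEi : E i = 0 by
    intro hdvd
    have := hp.factorization_pos_of_dvd (hoord i) hdvd
    simp only [hE] at hEi
    omega
  rcases hcase with ⟨hdN, hdM⟩ | ⟨hdN, hdM⟩
  · -- p divides n-product only
    have hmj : ∀ j, (m j).natAbs.factorization p = 0 := by
      intro j
      refine Nat.factorization_eq_zero_of_not_dvd (fun hd => hdM ?_)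
      rw [hMabs]
      exact hd.trans (Finset.dvd_prod_of_mem _ (Finset.mem_univ j))
    have hstep : ∀ j, E (j + 1) ≤ E j := by
      intro j
      have := hrec j
      rw [hmj j] at this
      simp only [hE, Nat.sub_zero] at this ⊢
      omega
    have hstable := cycle_stable E hstep
    have hconst := cycle_const E hstable
    obtain ⟨j₀, -, hj₀⟩ : ∃ j₀ ∈ Finset.univ, p ∣ (n j₀).natAbs := by
      refine hp.prime.exists_mem_finset_dvd ?_
      rwa [← hNabs]
    have hν : 0 < (n j₀).natAbs.factorization p :=
      hp.factorization_pos_of_dvd (Int.natAbs_ne_zero.mpr (hn j₀)) hj₀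
    have h1 := hrec j₀
    rw [hmj j₀] at h1
    have h2 := hstable j₀
    have h3 := hconst i j₀
    simp only [hE] at h2 h3 ⊢
    omega
  · -- p divides m-product only
    have hnj : ∀ j, (n j).natAbs.factorization p = 0 := by
      intro j
      refine Nat.factorization_eq_zero_of_not_dvd (fun hd => hdN ?_)
      rw [hNabs]
      exact hd.trans (Finset.dvd_prod_of_mem _ (Finset.mem_univ j))
    have hstep : ∀ j, E j ≤ E (j + 1) := by
      intro j
      have := hrec j
      rw [hnj j] at this
      simp only [hE, Nat.sub_zero] at this ⊢
      omega
    have hstable := cycle_stable' E hstep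
    have hconst := cycle_const E hstable
    obtain ⟨j₀, -, hj₀⟩ : ∃ j₀ ∈ Finset.univ, p ∣ (m j₀).natAbs := by
      refine hp.prime.exists_mem_finset_dvd ?_
      rwa [← hMabs]
    have hμ : 0 < (m j₀).natAbs.factorization p :=
      hp.factorization_pos_of_dvd (Int.natAbs_ne_zero.mpr (hm j₀)) hj₀
    have h1 := hrec j₀
    rw [hnj j₀] at h1
    have h2 := hstable j₀
    have h3 := hconst i j₀
    simp only [hE] at h2 h3 ⊢
    omega

end GBSAux

/-- Finite-quotient content of the paper's Proposition 3.2 (Closure): if the augmentation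
products of the cycle are isocratic, then on each vertex group `⟨a_i⟩` the group `Γ`
induces exactly the full pro-`I(n(Ξ),m(Ξ))` topology: (i) primes `p` with
`ν_p(n(Ξ)) = ν_p(m(Ξ))` appear with arbitrarily large powers in orders of images of `a_i`
in finite quotients, and (ii) primes with `ν_p(n(Ξ)) ≠ ν_p(m(Ξ))` never divide such orders. -/
theorem GBSCycle_vertex_group_closure
    (s : ℕ) (hs : 0 < s) (n m : Fin s → ℤ)
    (hn : ∀ i, n i ≠ 0) (hm : ∀ i, m i ≠ 0)
    (hiso : Isocratic (∏ j, n j) (∏ j, m j))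
    (i : Fin s) :
    (∀ p : ℕ, p.Prime →
      padicValNat p (∏ j, n j).natAbs = padicValNat p (∏ j, m j).natAbs →
      ∀ l : ℕ, ∃ (Q : Type) (_ : Group Q) (_ : Finite Q) (φ : GBSCycle s n m →* Q),
        p ^ l ∣ orderOf (φ (GBSCycle.a s n m i))) ∧
    (∀ p : ℕ, p.Prime →
      padicValNat p (∏ j, n j).natAbs ≠ padicValNat p (∏ j, m j).natAbs →
      ∀ (Q : Type) (_ : Group Q) (_ : Finite Q) (φ : GBSCycle s n m →* Q),
        ¬ p ∣ orderOf (φ (GBSCycle.a s n m i))) := by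
  constructor
  · intro p hp hveq l
    have hv : (∏ j, n j).natAbs.factorization p = (∏ j, m j).natAbs.factorization p := by
      rw [Nat.factorization_def _ hp, Nat.factorization_def _ hp]
      exact hveq
    exact GBSAux.partI hs n m hn hm i p hp hv l
  · intro p hp hne Q hQg hQf φ
    have hdvd_iff : ∀ z : ℤ, ((p : ℤ) ∣ z) ↔ p ∣ z.natAbs := fun z => by
      rw [← Int.dvd_natAbs, Int.natCast_dvd_natCast]
    by_cases h1 : (p : ℤ) ∣ ∏ j, n j <;> by_cases h2 : (p : ℤ) ∣ ∏ j, m j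
    · exact absurd (hiso p hp h1 h2) hne
    · exact GBSAux.partII hs n m hn hm i p hp
        (Or.inl ⟨(hdvd_iff _).mp h1, fun h => h2 ((hdvd_iff _).mpr h)⟩) Q φ
    · exact GBSAux.partII hs n m hn hm i p hp
        (Or.inr ⟨fun h => h1 ((hdvd_iff _).mpr h), (hdvd_iff _).mp h2⟩) Q φ
    · exfalso
      apply hne
      rw [padicValNat.eq_zero_of_not_dvd (fun h => h1 ((hdvd_iff _).mpr h)),
        padicValNat.eq_zero_of_not_dvd (fun h => h2 ((hdvd_iff _).mpr h))]
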